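/- Let A be an n×n quaternion matrix, let k ≥ 1 be an integer, let D be a Drazin inverse of A with index k, and let Y be a Moore–Penrose inverse of A. Then the matrix M := D·A·Y satisfies M·A·M = M, M·A = D·A, and A^k·M = A^k·Y; moreover, M is the unique matrix satisfying these three equations (M is the DMP inverse A^{d,†} = A^d A A† of A). -/
import Mathlib


/-- The DMP inverse `A^{d,†} = A^d·A·A†`: the matrix `M = D·A·Y` satisfies
`M·A·M = M`, `M·A = D·A`, `A^k·M = A^k·Y`, and it is the unique matrix
satisfying these three equations. -/
theorem dmp_inverse {n : ℕ} (k : ℕ) (hk : 1 ≤ k)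
    (A D Y : Matrix (Fin n) (Fin n) (Quaternion ℝ))
    (hD1 : A * D = D * A) (hD2 : D * A * D = D) (hD3 : D * A ^ (k + 1) = A ^ k)
    (hY1 : A * Y * A = A) (hY2 : Y * A * Y = Y)
    (hY3 : (A * Y).conjTranspose = A * Y) (hY4 : (Y * A).conjTranspose = Y * A) :
    ((D * A * Y) * A * (D * A * Y) = D * A * Y ∧
     (D * A * Y) * A = D * A ∧
     A ^ k * (D * A * Y) = A ^ k * Y) ∧
    (∀ M : Matrix (Fin n) (Fin n) (Quaternion ℝ),
      M * A * M = M → M * A = D * A → A ^ k * M = A ^ k * Y →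
      M = D * A * Y) := by
  have hcomm : Commute D A := hD1.symm
  have hMA : (D * A * Y) * A = D * A := by
    calc (D * A * Y) * A = D * (A * Y * A) := by noncomm_ring
    _ = D * A := by rw [hY1]
  have hMAM : (D * A * Y) * A * (D * A * Y) = D * A * Y := by
    rw [hMA]
    calc D * A * (D * A * Y) = (D * A * D) * (A * Y) := by noncomm_ring
    _ = D * (A * Y) := by rw [hD2]
    _ = D * A * Y := (mul_assoc D A Y).symm
  have hAkM : A ^ k * (D * A * Y) = A ^ k * Y := by
    have h : A ^ k * D * A = A ^ k := by
      have h1 : A ^ k * D = D * A ^ k := (hcomm.symm.pow_left k).eq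
      rw [h1, mul_assoc, ← pow_succ, hD3]
    calc A ^ k * (D * A * Y) = (A ^ k * D * A) * Y := by noncomm_ring
    _ = A ^ k * Y := by rw [h]
  -- key: any M with the three properties equals D^k * A^k * Y
  have key : ∀ M : Matrix (Fin n) (Fin n) (Quaternion ℝ),
      M * A * M = M → M * A = D * A → A ^ k * M = A ^ k * Y →
      M = D ^ k * A ^ k * Y := by
    intro M h1 h2 h3
    have hstep : M = D * A * M := by rw [← h2, h1]
    have hiter : ∀ j : ℕ, M = (D * A) ^ j * M := by
      intro j
      induction j with
      | zero => simp
      | succ j ih =>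
        calc M = (D * A) ^ j * M := ih
        _ = (D * A) ^ j * (D * A * M) := by rw [← hstep]
        _ = (D * A) ^ (j + 1) * M := by rw [pow_succ, mul_assoc ((D * A) ^ j)]
    calc M = (D * A) ^ k * M := hiter k
    _ = D ^ k * A ^ k * M := by rw [hcomm.mul_pow]
    _ = D ^ k * (A ^ k * M) := by noncomm_ring
    _ = D ^ k * (A ^ k * Y) := by rw [h3]
    _ = D ^ k * A ^ k * Y := by noncomm_ring
  refine ⟨⟨hMAM, hMA, hAkM⟩, fun M h1 h2 h3 => ?_⟩
  rw [key M h1 h2 h3, key (D * A * Y) hMAM hMA hAkM]
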